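/- Let N = 2n+1 with n ≥ 1, let t_j = 2π(j−1)/N for j = 1,…,N, and let f_j, g_j, h_j (j = 1,…,N) be real numbers with Σ_j g_j = 0 and Σ_j h_j = 0. Define, for k = 0,…,n, A_{0,k} = (2/N) Σ_j f_j cos(k t_j), B_{0,k} = (2/N) Σ_j f_j sin(k t_j), A_{1,k}, B_{1,k} analogously from the g_j, and A_{2,k}, B_{2,k} analogously from the h_j. Set T(t) = A_{0,0}/2 + Σ_{k=1}^{n} [ a_k cos(kt) + a_{N−k} cos((N−k)t) + a_{N+k} cos((N+k)t) + b_k sin(kt) + b_{N−k} sin((N−k)t) + b_{N+k} sin((N+k)t) ] with a_k = [A_{0,k}(N²−k²) − 2kB_{1,k} + A_{2,k}]/N², b_k = [B_{0,k}(N²−k²) + 2kA_{1,k} + B_{2,k}]/N², a_{N−k} = [A_{0,k}(kN+k²) + B_{1,k}(N+2k) − A_{2,k}]/(2N²), b_{N−k} = [−B_{0,k}(kN+k²) + A_{1,k}(N+2k) + B_{2,k}]/(2N²), a_{N+k} = [A_{0,k}(k²−kN) + B_{1,k}(2k−N) − A_{2,k}]/(2N²), b_{N+k} = [B_{0,k}(k²−kN)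 + A_{1,k}(N−2k) − B_{2,k}]/(2N²). Then for every j = 1,…,N: T(t_j) = f_j, T′(t_j) = g_j, and T″(t_j) = h_j. -/

import Mathlib

open Real Finset

private lemma sum_cos_eq_neg_half {n N : ℕ} (hN : N = 2*n+1) {m : ℤ} (hm : ¬ (N:ℤ) ∣ m) :
    ∑ k ∈ Icc 1 n, Real.cos ((k:ℝ) * (2*π*m/N)) = -(1/2) := by
  have hNpos : 0 < N := by omega
  have hNne : (N:ℝ) ≠ 0 := Nat.cast_ne_zero.mpr (by omega)
  set θ : ℝ := 2*π*m/N with hθ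
  have hs : Real.sin (θ/2) ≠ 0 := by
    intro hzero
    rw [Real.sin_eq_zero_iff] at hzero
    obtain ⟨q, hq⟩ := hzero
    apply hm
    refine ⟨q, ?_⟩
    have hpi : (2*π) ≠ 0 := by positivity
    have h2 : ((q:ℝ)*(N:ℝ)) * (2*π) = (m:ℝ) * (2*π) := by
      rw [hθ] at hq
      field_simp at hq
      ring_nf at hq ⊢
      rw [← hq]; ring
    have h3 : ((q:ℝ)*(N:ℝ)) = (m:ℝ) := mul_right_cancel₀ hpi h2
    have : ((N*q : ℤ):ℝ) = ((m:ℤ):ℝ) := by push_cast; linarith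
    exact_mod_cast this.symm
  have key : 2 * Real.sin (θ/2) * ∑ k ∈ Icc 1 n, Real.cos ((k:ℝ)*θ)
      = Real.sin ((n:ℝ)*θ + θ/2) - Real.sin (θ/2) := by
    rw [Finset.mul_sum, ← Finset.Ico_add_one_right_eq_Icc, Finset.sum_Ico_eq_sum_range]
    have hrr : n + 1 - 1 = n := by omega
    rw [hrr]
    have := Finset.sum_range_sub (fun k : ℕ => Real.sin ((k:ℝ)*θ + θ/2)) n
    simp only [Nat.cast_zero, zero_mul, zero_add] at this
    rw [← this]
    apply Finset.sum_congr rfl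
    intro i _
    have h1 : ((1+i : ℕ):ℝ) = (i:ℝ) + 1 := by push_cast; ring
    have h2 : ((i+1 : ℕ):ℝ) = (i:ℝ) + 1 := by push_cast; ring
    rw [h1, h2, show (i:ℝ)*θ + θ/2 = ((i:ℝ)+1)*θ - θ/2 by ring,
      Real.sin_add, Real.sin_sub]
    ring
  have hend : Real.sin ((n:ℝ)*θ + θ/2) = 0 := by
    have hNr : (N:ℝ) = 2*(n:ℝ)+1 := by rw [hN]; push_cast; ring
    have : (n:ℝ)*θ + θ/2 = (m:ℝ)*π := by
      have h2n : (2*(n:ℝ)+1) ≠ 0 := by positivity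
      rw [hθ, hNr]
      field_simp
    rw [this]
    exact Real.sin_int_mul_pi m
  have h2 : 2 * Real.sin (θ/2) * ∑ k ∈ Icc 1 n, Real.cos ((k:ℝ)*θ)
      = 2 * Real.sin (θ/2) * (-(1/2)) := by rw [key, hend]; ring
  exact mul_left_cancel₀ (mul_ne_zero two_ne_zero hs) h2

private lemma dirichlet {n N : ℕ} (hN : N = 2*n+1) (m : ℤ)
    (hhalf : ¬ (N:ℤ) ∣ m → ∑ k ∈ Icc 1 n, Real.cos ((k:ℝ) * (2*π*m/N)) = -(1/2)) :
    (1:ℝ) + 2 * ∑ k ∈ Icc 1 n, Real.cos ((k:ℝ) * (2*π*(m:ℝ)/N)) =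
      if (N:ℤ) ∣ m then (N:ℝ) else 0 := by
  have hNne : (N:ℝ) ≠ 0 := Nat.cast_ne_zero.mpr (by omega)
  by_cases hd : (N:ℤ) ∣ m
  · obtain ⟨c, hc⟩ := hd
    rw [if_pos ⟨c, hc⟩]
    have hterm : ∀ k ∈ Icc 1 n, Real.cos ((k:ℝ)*(2*π*(m:ℝ)/N)) = 1 := by
      intro k _
      have hmr : (m:ℝ) = (N:ℝ)*(c:ℝ) := by exact_mod_cast congrArg (Int.cast : ℤ → ℝ) hc
      have harg : (k:ℝ)*(2*π*(m:ℝ)/N) = ((k*c : ℤ):ℝ) * (2*π) := by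
        rw [hmr]; push_cast; field_simp
      rw [harg, Real.cos_int_mul_two_pi]
    rw [Finset.sum_congr rfl hterm, Finset.sum_const, Nat.card_Icc]
    have hcard : n + 1 - 1 = n := by omega
    rw [hcard, hN, nsmul_eq_mul, mul_one]
    push_cast; ring
  · rw [if_neg hd, hhalf hd]; ring

private lemma mul_two_sum (c : ℝ) (S : Finset ℕ) (v : ℕ → ℝ) :
    c * (2 * ∑ k ∈ S, v k) = ∑ k ∈ S, 2 * c * v k := by
  rw [show c * (2 * ∑ k ∈ S, v k) = (∑ k ∈ S, v k) * (2*c) from by ring, Finset.sum_mul]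
  exact Finset.sum_congr rfl (fun k _ => by ring)

private lemma inversion {n N : ℕ} (hN : N = 2*n+1) {t : ℕ → ℝ}
    (ht : ∀ j, t j = 2*π*((j:ℝ)-1)/N) (u : ℕ → ℝ) {j : ℕ} (hj : j ∈ Icc 1 N) :
    (2/(N:ℝ) * ∑ i ∈ Icc 1 N, u i) / 2
      + ∑ k ∈ Icc 1 n,
        ((2/(N:ℝ) * ∑ i ∈ Icc 1 N, u i * Real.cos ((k:ℝ) * t i)) * Real.cos ((k:ℝ) * t j)
        + (2/(N:ℝ) * ∑ i ∈ Icc 1 N, u i * Real.sin ((k:ℝ) * t i)) * Real.sin ((k:ℝ) * t j))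
      = u j := by
  have hNne : (N:ℝ) ≠ 0 := Nat.cast_ne_zero.mpr (by omega)
  obtain ⟨hj1, hjN⟩ := Finset.mem_Icc.mp hj
  have e1 : ∀ k i : ℕ,
      Real.cos ((k:ℝ)*t i) * Real.cos ((k:ℝ)*t j) + Real.sin ((k:ℝ)*t i) * Real.sin ((k:ℝ)*t j)
      = Real.cos ((k:ℝ) * (2*π*((((i:ℤ)-(j:ℤ)):ℤ):ℝ)/N)) := by
    intro k i
    rw [← Real.cos_sub]
    congr 1
    rw [ht i, ht j]
    push_cast
    field_simp
    ring
  calc (2/(N:ℝ) * ∑ i ∈ Icc 1 N, u i) / 2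
      + ∑ k ∈ Icc 1 n,
        ((2/(N:ℝ) * ∑ i ∈ Icc 1 N, u i * Real.cos ((k:ℝ) * t i)) * Real.cos ((k:ℝ) * t j)
        + (2/(N:ℝ) * ∑ i ∈ Icc 1 N, u i * Real.sin ((k:ℝ) * t i)) * Real.sin ((k:ℝ) * t j))
      = ∑ i ∈ Icc 1 N, u i / N
        + ∑ k ∈ Icc 1 n, ∑ i ∈ Icc 1 N, 2/(N:ℝ) * u i *
            Real.cos ((k:ℝ) * (2*π*((((i:ℤ)-(j:ℤ)):ℤ):ℝ)/N)) := by
        congr 1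
        · rw [show (2/(N:ℝ) * ∑ i ∈ Icc 1 N, u i) / 2 = (∑ i ∈ Icc 1 N, u i) / N from by ring,
            Finset.sum_div]
        · apply Finset.sum_congr rfl
          intro k _
          rw [Finset.mul_sum, Finset.mul_sum, Finset.sum_mul, Finset.sum_mul,
            ← Finset.sum_add_distrib]
          apply Finset.sum_congr rfl
          intro i _
          rw [← e1 k i]
          ring
    _ = ∑ i ∈ Icc 1 N, (u i / N) * ((1:ℝ)
          + 2 * ∑ k ∈ Icc 1 n, Real.cos ((k:ℝ) * (2*π*((((i:ℤ)-(j:ℤ)):ℤ):ℝ)/N))) := by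
        rw [Finset.sum_comm, ← Finset.sum_add_distrib]
        apply Finset.sum_congr rfl
        intro i _
        rw [mul_add, mul_one, mul_two_sum]
        congr 1
        apply Finset.sum_congr rfl
        intro k _
        ring
    _ = ∑ i ∈ Icc 1 N, (u i / N) * (if (N:ℤ) ∣ ((i:ℤ)-(j:ℤ)) then (N:ℝ) else 0) := by
        apply Finset.sum_congr rfl
        intro i _
        rw [dirichlet hN _ (fun hnd => sum_cos_eq_neg_half hN hnd)]
    _ = u j := by
        rw [Finset.sum_eq_single j]
        · rw [if_pos (by simp)]
          field_simp
        · intro i hi hne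
          obtain ⟨hi1, hiN⟩ := Finset.mem_Icc.mp hi
          rw [if_neg, mul_zero]
          rintro ⟨c, hc⟩
          have habs : |(i:ℤ) - (j:ℤ)| < N := by
            rw [abs_lt]
            constructor <;> [skip; skip] <;> omega
          have hc0 : c = 0 := by
            by_contra hc0
            have h1 : (1:ℤ) ≤ |c| := Int.one_le_abs (by omega)
            have h2 : ((N:ℤ)) ≤ |(N:ℤ)*c| := by
              rw [abs_mul, abs_of_nonneg (by positivity : (0:ℤ) ≤ (N:ℤ))]
              nlinarith [h1, (by omega : (0:ℤ) ≤ (N:ℤ))]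
            rw [hc] at habs
            omega
          rw [hc0, mul_zero] at hc
          exact hne (by omega)
        · intro hnot
          exact absurd hj hnot

private lemma hd_cos (c r x : ℝ) :
    HasDerivAt (fun y => c * Real.cos (r * y)) (-(c * r) * Real.sin (r * x)) x := by
  have h : HasDerivAt (fun y : ℝ => r * y) r x := by
    simpa using (hasDerivAt_id x).const_mul r
  have h2 := (h.cos).const_mul c
  refine h2.congr_deriv ?_
  ring

private lemma hd_sin (c r x : ℝ) :
    HasDerivAt (fun y => c * Real.sin (r * y)) (c * r * Real.cos (r * x)) x := by
  have h : HasDerivAt (fun y : ℝ => r * y) r x := by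
    simpa using (hasDerivAt_id x).const_mul r
  have h2 := (h.sin).const_mul c
  refine h2.congr_deriv ?_
  ring


/-- The Hermite trigonometric polynomial of formula (8) with `I = 0`, built from
the discrete Fourier coefficients of the data `f_j`, `g_j`, `h_j` (function,
first- and second-derivative values, the derivative data being centered),
solves the Hermite interpolation problem of order `p = 2` on the grid
`Δ_N^{(0)}` with nodes `t_j = 2π(j-1)/N`, `N = 2n+1`. -/
theorem hermite_interpolation_p2_grid0 (n : ℕ) (hn : 1 ≤ n) (N : ℕ) (hN : N = 2 * n + 1)
    (t : ℕ → ℝ) (ht : ∀ j, t j = 2 * π * ((j : ℝ) - 1) / N)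
    (f g h : ℕ → ℝ) (hg : ∑ j ∈ Icc 1 N, g j = 0) (hh : ∑ j ∈ Icc 1 N, h j = 0)
    (A₀ B₀ A₁ B₁ A₂ B₂ : ℕ → ℝ)
    (hA₀ : ∀ k ∈ Icc 0 n, A₀ k = 2 / (N : ℝ) * ∑ j ∈ Icc 1 N, f j * cos ((k : ℝ) * t j))
    (hB₀ : ∀ k ∈ Icc 0 n, B₀ k = 2 / (N : ℝ) * ∑ j ∈ Icc 1 N, f j * sin ((k : ℝ) * t j))
    (hA₁ : ∀ k ∈ Icc 0 n, A₁ k = 2 / (N : ℝ) * ∑ j ∈ Icc 1 N, g j * cos ((k : ℝ) * t j))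
    (hB₁ : ∀ k ∈ Icc 0 n, B₁ k = 2 / (N : ℝ) * ∑ j ∈ Icc 1 N, g j * sin ((k : ℝ) * t j))
    (hA₂ : ∀ k ∈ Icc 0 n, A₂ k = 2 / (N : ℝ) * ∑ j ∈ Icc 1 N, h j * cos ((k : ℝ) * t j))
    (hB₂ : ∀ k ∈ Icc 0 n, B₂ k = 2 / (N : ℝ) * ∑ j ∈ Icc 1 N, h j * sin ((k : ℝ) * t j))
    (a b : ℕ → ℝ)
    (hab : ∀ k ∈ Icc 1 n,
      a k = (A₀ k * ((N : ℝ) ^ 2 - (k : ℝ) ^ 2) - 2 * k * B₁ k + A₂ k) / (N : ℝ) ^ 2 ∧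
      b k = (B₀ k * ((N : ℝ) ^ 2 - (k : ℝ) ^ 2) + 2 * k * A₁ k + B₂ k) / (N : ℝ) ^ 2 ∧
      a (N - k) = (A₀ k * ((k : ℝ) * N + (k : ℝ) ^ 2) + B₁ k * ((N : ℝ) + 2 * k) - A₂ k) /
        (2 * (N : ℝ) ^ 2) ∧
      b (N - k) = (-B₀ k * ((k : ℝ) * N + (k : ℝ) ^ 2) + A₁ k * ((N : ℝ) + 2 * k) + B₂ k) /
        (2 * (N : ℝ) ^ 2) ∧
      a (N + k) = (A₀ k * ((k : ℝ) ^ 2 - (k : ℝ) * N) + B₁ k * (2 * k - (N : ℝ)) - A₂ k) /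
        (2 * (N : ℝ) ^ 2) ∧
      b (N + k) = (B₀ k * ((k : ℝ) ^ 2 - (k : ℝ) * N) + A₁ k * ((N : ℝ) - 2 * k) - B₂ k) /
        (2 * (N : ℝ) ^ 2))
    (T : ℝ → ℝ)
    (hT : ∀ x : ℝ, T x = A₀ 0 / 2 + ∑ k ∈ Icc 1 n,
      (a k * cos ((k : ℝ) * x) + a (N - k) * cos (((N : ℝ) - k) * x) +
       a (N + k) * cos (((N : ℝ) + k) * x) +
       b k * sin ((k : ℝ) * x) + b (N - k) * sin (((N : ℝ) - k) * x) +
       b (N + k) * sin (((N : ℝ) + k) * x))) :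
    ∀ j ∈ Icc 1 N, T (t j) = f j ∧ deriv T (t j) = g j ∧ deriv (deriv T) (t j) = h j := by
  intro j hj
  obtain ⟨hj1, hjN⟩ := Finset.mem_Icc.mp hj
  have hNne : (N : ℝ) ≠ 0 := Nat.cast_ne_zero.mpr (by omega)
  have hmem : ∀ k ∈ Icc 1 n, k ∈ Icc 0 n := fun k hk =>
    Finset.mem_Icc.mpr ⟨Nat.zero_le _, (Finset.mem_Icc.mp hk).2⟩
  -- node reductions
  have hjc : ((j - 1 : ℕ) : ℝ) = (j : ℝ) - 1 := by
    rw [Nat.cast_sub hj1]; norm_num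
  have hNt : (N : ℝ) * t j = ((j - 1 : ℕ) : ℝ) * (2 * π) := by
    rw [ht j, hjc]; field_simp
  have hsin0 : Real.sin (((j - 1 : ℕ) : ℝ) * (2 * π)) = 0 := by
    have e : ((j - 1 : ℕ) : ℝ) * (2 * π) = ((2 * (j - 1 : ℕ) : ℤ) : ℝ) * π := by
      push_cast; ring
    rw [e, Real.sin_int_mul_pi]
  have hcosm : ∀ r : ℝ, Real.cos (((N : ℝ) - r) * t j) = Real.cos (r * t j) := by
    intro r
    rw [sub_mul, hNt, Real.cos_sub, Real.cos_nat_mul_two_pi, hsin0]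
    ring
  have hcosp : ∀ r : ℝ, Real.cos (((N : ℝ) + r) * t j) = Real.cos (r * t j) := by
    intro r
    rw [add_mul, hNt, Real.cos_add, Real.cos_nat_mul_two_pi, hsin0]
    ring
  have hsinm : ∀ r : ℝ, Real.sin (((N : ℝ) - r) * t j) = -Real.sin (r * t j) := by
    intro r
    rw [sub_mul, hNt, Real.sin_sub, Real.cos_nat_mul_two_pi, hsin0]
    ring
  have hsinp : ∀ r : ℝ, Real.sin (((N : ℝ) + r) * t j) = Real.sin (r * t j) := by
    intro r
    rw [add_mul, hNt, Real.sin_add, Real.cos_nat_mul_two_pi, hsin0]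
    ring
  -- part 1 : value
  have hval : T (t j) = f j := by
    have h1 : T (t j) = A₀ 0 / 2 + ∑ k ∈ Icc 1 n,
        (A₀ k * Real.cos ((k : ℝ) * t j) + B₀ k * Real.sin ((k : ℝ) * t j)) := by
      rw [hT]
      congr 1
      apply Finset.sum_congr rfl
      intro k hk
      obtain ⟨ha1, hb1, ha2, hb2, ha3, hb3⟩ := hab k hk
      rw [hcosm, hcosp, hsinm, hsinp, ha1, hb1, ha2, hb2, ha3, hb3]
      field_simp
      ring
    have h0 : A₀ 0 = 2 / (N : ℝ) * ∑ i ∈ Icc 1 N, f i := by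
      rw [hA₀ 0 (Finset.mem_Icc.mpr ⟨le_refl _, Nat.zero_le _⟩)]
      congr 1
      apply Finset.sum_congr rfl
      intro i _
      norm_num
    have h2 : ∑ k ∈ Icc 1 n,
        (A₀ k * Real.cos ((k : ℝ) * t j) + B₀ k * Real.sin ((k : ℝ) * t j))
        = ∑ k ∈ Icc 1 n,
        ((2 / (N : ℝ) * ∑ i ∈ Icc 1 N, f i * Real.cos ((k : ℝ) * t i)) * Real.cos ((k : ℝ) * t j)
        + (2 / (N : ℝ) * ∑ i ∈ Icc 1 N, f i * Real.sin ((k : ℝ) * t i)) * Real.sin ((k : ℝ) * t j)) :=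
      Finset.sum_congr rfl fun k hk => by rw [hA₀ k (hmem k hk), hB₀ k (hmem k hk)]
    rw [h1, h0, h2]
    exact inversion hN ht f hj
  -- derivative setup
  set F1 : ℝ → ℝ := fun x => ∑ k ∈ Icc 1 n,
    (-(a k * (k : ℝ)) * Real.sin ((k : ℝ) * x)
      + -(a (N - k) * ((N : ℝ) - (k : ℝ))) * Real.sin (((N : ℝ) - (k : ℝ)) * x)
      + -(a (N + k) * ((N : ℝ) + (k : ℝ))) * Real.sin (((N : ℝ) + (k : ℝ)) * x)
      + b k * (k : ℝ) * Real.cos ((k : ℝ) * x)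
      + b (N - k) * ((N : ℝ) - (k : ℝ)) * Real.cos (((N : ℝ) - (k : ℝ)) * x)
      + b (N + k) * ((N : ℝ) + (k : ℝ)) * Real.cos (((N : ℝ) + (k : ℝ)) * x)) with hF1
  set F2 : ℝ → ℝ := fun x => ∑ k ∈ Icc 1 n,
    (-(a k * (k : ℝ)) * (k : ℝ) * Real.cos ((k : ℝ) * x)
      + -(a (N - k) * ((N : ℝ) - (k : ℝ))) * ((N : ℝ) - (k : ℝ)) * Real.cos (((N : ℝ) - (k : ℝ)) * x)
      + -(a (N + k) * ((N : ℝ) + (k : ℝ))) * ((N : ℝ) + (k : ℝ)) * Real.cos (((N : ℝ) + (k : ℝ)) * x)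
      + -(b k * (k : ℝ) * (k : ℝ)) * Real.sin ((k : ℝ) * x)
      + -(b (N - k) * ((N : ℝ) - (k : ℝ)) * ((N : ℝ) - (k : ℝ))) * Real.sin (((N : ℝ) - (k : ℝ)) * x)
      + -(b (N + k) * ((N : ℝ) + (k : ℝ)) * ((N : ℝ) + (k : ℝ))) * Real.sin (((N : ℝ) + (k : ℝ)) * x)) with hF2
  have hdT : ∀ x, HasDerivAt T (F1 x) x := by
    intro x
    rw [funext hT]
    apply HasDerivAt.const_add
    simp only [hF1]
    exact HasDerivAt.fun_sum fun k _ =>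
      ((((((hd_cos (a k) (k : ℝ) x).add
        (hd_cos (a (N - k)) ((N : ℝ) - (k : ℝ)) x)).add
        (hd_cos (a (N + k)) ((N : ℝ) + (k : ℝ)) x)).add
        (hd_sin (b k) (k : ℝ) x)).add
        (hd_sin (b (N - k)) ((N : ℝ) - (k : ℝ)) x)).add
        (hd_sin (b (N + k)) ((N : ℝ) + (k : ℝ)) x))
  have hderivT : deriv T = F1 := funext fun x => (hdT x).deriv
  have hdF1 : ∀ x, HasDerivAt F1 (F2 x) x := by
    intro x
    rw [hF1]
    simp only [hF2]
    exact HasDerivAt.fun_sum fun k _ =>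
      ((((((hd_sin (-(a k * (k : ℝ))) (k : ℝ) x).add
        (hd_sin (-(a (N - k) * ((N : ℝ) - (k : ℝ)))) ((N : ℝ) - (k : ℝ)) x)).add
        (hd_sin (-(a (N + k) * ((N : ℝ) + (k : ℝ)))) ((N : ℝ) + (k : ℝ)) x)).add
        (hd_cos (b k * (k : ℝ)) (k : ℝ) x)).add
        (hd_cos (b (N - k) * ((N : ℝ) - (k : ℝ))) ((N : ℝ) - (k : ℝ)) x)).add
        (hd_cos (b (N + k) * ((N : ℝ) + (k : ℝ))) ((N : ℝ) + (k : ℝ)) x))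
  -- part 2 : first derivative
  have hder1 : F1 (t j) = g j := by
    have e : F1 (t j) = ∑ k ∈ Icc 1 n,
        (A₁ k * Real.cos ((k : ℝ) * t j) + B₁ k * Real.sin ((k : ℝ) * t j)) := by
      simp only [hF1]
      apply Finset.sum_congr rfl
      intro k hk
      obtain ⟨ha1, hb1, ha2, hb2, ha3, hb3⟩ := hab k hk
      rw [hcosm, hcosp, hsinm, hsinp, ha1, hb1, ha2, hb2, ha3, hb3]
      field_simp
      ring
    have hinv := inversion hN ht g hj
    rw [hg, mul_zero, zero_div, zero_add] at hinv
    rw [e, ← hinv]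
    apply Finset.sum_congr rfl
    intro k hk
    rw [hA₁ k (hmem k hk), hB₁ k (hmem k hk)]
  -- part 3 : second derivative
  have hder2 : F2 (t j) = h j := by
    have e : F2 (t j) = ∑ k ∈ Icc 1 n,
        (A₂ k * Real.cos ((k : ℝ) * t j) + B₂ k * Real.sin ((k : ℝ) * t j)) := by
      simp only [hF2]
      apply Finset.sum_congr rfl
      intro k hk
      obtain ⟨ha1, hb1, ha2, hb2, ha3, hb3⟩ := hab k hk
      rw [hcosm, hcosp, hsinm, hsinp, ha1, hb1, ha2, hb2, ha3, hb3]
      field_simp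
      ring
    have hinv := inversion hN ht h hj
    rw [hh, mul_zero, zero_div, zero_add] at hinv
    rw [e, ← hinv]
    apply Finset.sum_congr rfl
    intro k hk
    rw [hA₂ k (hmem k hk), hB₂ k (hmem k hk)]
  refine ⟨hval, ?_, ?_⟩
  · rw [hderivT]; exact hder1
  · rw [hderivT, (funext fun x => (hdF1 x).deriv : deriv F1 = F2)]; exact hder2
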